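/- Let (G,σ) be a signed simple graph having a unique Sachs subgraph. If G has a perfect matching M, then det(A) = (−1)^{|M|}, where A is the adjacency matrix of (G,σ). In particular, A is invertible. -/

import Mathlib

open scoped Classical

/-- Degree of a vertex in a simple graph (as a cardinality, avoiding decidability). -/
noncomputable def sachsDeg {n : ℕ} (H : SimpleGraph (Fin n)) (v : Fin n) : ℕ :=
  Nat.card {w // H.Adj v w}

/-- `H` is a Sachs subgraph of the simple graph `G`: a spanning subgraph all of whose
components are `K₂`'s or cycles; equivalently every vertex has degree `1` or `2` in `H`
and no edge of `H` joins a degree-`1` vertex to a degree-`2` vertex. -/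
def IsSachsSubgraph {n : ℕ} (G H : SimpleGraph (Fin n)) : Prop :=
  H ≤ G ∧ (∀ v, sachsDeg H v = 1 ∨ sachsDeg H v = 2) ∧
    ∀ u v, H.Adj u v → ¬(sachsDeg H u = 1 ∧ sachsDeg H v = 2)

/-- `M` is a perfect matching of `G`, viewed as a spanning subgraph of `K₂` components. -/
def IsPerfectMatchingSub {n : ℕ} (G M : SimpleGraph (Fin n)) : Prop :=
  M ≤ G ∧ ∀ v, sachsDeg M v = 1

/-- The spanning subgraph induced by a permutation. -/
def permGraph {n : ℕ} (π : Equiv.Perm (Fin n)) : SimpleGraph (Fin n) where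
  Adj u v := (π u = v ∨ π v = u) ∧ u ≠ v
  symm := ⟨fun u v ⟨h, hne⟩ => ⟨h.symm, hne.symm⟩⟩
  loopless := ⟨fun v h => h.2 rfl⟩

lemma permGraph_adj {n : ℕ} (π : Equiv.Perm (Fin n)) (u v : Fin n) :
    (permGraph π).Adj u v ↔ (π u = v ∨ π v = u) ∧ u ≠ v := Iff.rfl

lemma permGraph_deg {n : ℕ} (π : Equiv.Perm (Fin n)) (hfix : ∀ i, π i ≠ i) (v : Fin n) :
    sachsDeg (permGraph π) v = if π (π v) = v then 1 else 2 := by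
  have hset : {w | (permGraph π).Adj v w} = {π v, π.symm v} := by
    ext w
    simp only [Set.mem_setOf_eq, permGraph_adj, Set.mem_insert_iff, Set.mem_singleton_iff]
    constructor
    · rintro ⟨h | h, hne⟩
      · exact Or.inl h.symm
      · exact Or.inr (by rw [← h, Equiv.symm_apply_apply])
    · rintro (rfl | rfl)
      · exact ⟨Or.inl rfl, (hfix v).symm⟩
      · refine ⟨Or.inr (Equiv.apply_symm_apply _ _), ?_⟩
        exact fun h => hfix (π.symm v) ((π.apply_symm_apply v).trans h)
  have : sachsDeg (permGraph π) v = ({π v, π.symm v} : Set (Fin n)).ncard := by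
    rw [sachsDeg, ← Nat.card_coe_set_eq, ← hset]
    rfl
  rw [this]
  by_cases h : π (π v) = v
  · rw [if_pos h]
    have : π.symm v = π v := π.symm_apply_eq.mpr h.symm
    rw [this, Set.pair_eq_singleton, Set.ncard_singleton]
  · rw [if_neg h]
    refine Set.ncard_pair ?_
    exact fun he => h (by rw [he, Equiv.apply_symm_apply])

lemma permGraph_sachs {n : ℕ} (G : SimpleGraph (Fin n)) (π : Equiv.Perm (Fin n))
    (hadj : ∀ i, G.Adj i (π i)) : IsSachsSubgraph G (permGraph π) := by
  have hfix : ∀ i, π i ≠ i := fun i => (hadj i).ne'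
  refine ⟨?_, ?_, ?_⟩
  · rintro u v ⟨h | h, hne⟩
    · exact h ▸ hadj u
    · exact h ▸ (hadj v).symm
  · intro v
    rw [permGraph_deg π hfix]
    by_cases h : π (π v) = v
    · rw [if_pos h]; exact Or.inl rfl
    · rw [if_neg h]; exact Or.inr rfl
  · rintro u v huv ⟨h1, h2⟩
    rw [permGraph_deg π hfix] at h1
    rw [permGraph_deg π hfix] at h2
    have hu : π (π u) = u := by
      by_contra hc; rw [if_neg hc] at h1; omega
    have hv : π (π v) ≠ v := by
      intro hc; rw [if_pos hc] at h2; omega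
    obtain ⟨h | h, hne⟩ := huv
    · exact hv (by rw [← h, hu])
    · have hvu : v = π u := π.injective (h.trans hu.symm)
      exact hv (by rw [hvu, hu])

theorem det_of_signed_graph_with_unique_sachs
    {n : ℕ} (G : SimpleGraph (Fin n))
    (σ : Fin n → Fin n → ℝ) (hσsymm : ∀ i j, σ i j = σ j i)
    (hσval : ∀ i j, G.Adj i j → σ i j = 1 ∨ σ i j = -1)
    (A : Matrix (Fin n) (Fin n) ℝ)
    (hAdef : A = Matrix.of fun i j => if G.Adj i j then σ i j else 0)
    (hunique : ∃! S : SimpleGraph (Fin n), IsSachsSubgraph G S)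
    (M : SimpleGraph (Fin n)) (hM : IsPerfectMatchingSub G M) :
    A.det = (-1) ^ (Nat.card M.edgeSet) ∧ IsUnit A.det := by
  classical
  obtain ⟨S, hS, hSuniq⟩ := hunique
  obtain ⟨hMG, hMdeg⟩ := hM
  have hMsachs : IsSachsSubgraph G M := by
    refine ⟨hMG, fun v => Or.inl (hMdeg v), fun u v _ h => ?_⟩
    rw [hMdeg v] at h
    exact absurd h.2 (by norm_num)
  have hallM : ∀ H, IsSachsSubgraph G H → H = M := fun H hH =>
    (hSuniq H hH).trans (hSuniq M hMsachs).symm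
  have hex : ∀ v, ∃ w, M.Adj v w ∧ ∀ u, M.Adj v u → u = w := by
    intro v
    obtain ⟨⟨w, hw⟩, huniq⟩ := Nat.card_eq_one_iff_exists.mp (hMdeg v)
    exact ⟨w, hw, fun u hu => congrArg Subtype.val (huniq ⟨u, hu⟩)⟩
  choose f hf hfu using hex
  have hinv : Function.Involutive f := fun v => (hfu (f v) v (hf v).symm).symm
  have hadj₀ : ∀ i, G.Adj i (f i) := fun i => hMG (hf i)
  set π₀ : Equiv.Perm (Fin n) := Function.Involutive.toPerm f hinv with hπ₀
  have hπ₀app : ∀ i, π₀ i = f i := fun i => rfl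
  have hkey : ∀ π : Equiv.Perm (Fin n), (∀ i, G.Adj i (π i)) → π = π₀ := by
    intro π hadj
    have hfix : ∀ i, π i ≠ i := fun i => (hadj i).ne'
    have hPM : permGraph π = M := hallM _ (permGraph_sachs G π hadj)
    ext i
    have hMadj : M.Adj i (π i) := by
      rw [← hPM]
      exact ⟨Or.inl rfl, (hadj i).ne⟩
    exact congrArg Fin.val (hfu i (π i) hMadj)
  have hdet : A.det = ((Equiv.Perm.sign π₀ : ℤ) : ℝ) * ∏ i, A (π₀ i) i := by
    rw [Matrix.det_apply']
    refine Finset.sum_eq_single_of_mem π₀ (Finset.mem_univ _) ?_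
    intro π _ hne
    rcases eq_or_ne (∏ i, A (π i) i) 0 with h0 | h0
    · rw [h0, mul_zero]
    · exfalso
      apply hne
      apply hkey
      intro i
      have hA : A (π i) i ≠ 0 := by
        intro hz
        exact h0 (Finset.prod_eq_zero (Finset.mem_univ i) hz)
      rw [hAdef] at hA
      simp only [Matrix.of_apply] at hA
      by_cases hGa : G.Adj (π i) i
      · exact hGa.symm
      · rw [if_neg hGa] at hA; exact absurd rfl hA
  have hprod : ∏ i, A (π₀ i) i = 1 := by
    have h1 : ∀ i, A (π₀ i) i = σ (f i) i := by
      intro i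
      rw [hAdef]
      simp only [Matrix.of_apply, hπ₀app]
      rw [if_pos (hadj₀ i).symm]
    rw [Finset.prod_congr rfl (fun i _ => h1 i)]
    refine Finset.prod_ninvolution f ?_ ?_ (fun a => Finset.mem_univ _) hinv
    · intro a
      rw [hinv a, hσsymm a (f a)]
      rcases hσval (f a) a (hadj₀ a).symm with h | h <;> rw [h] <;> norm_num
    · intro a _
      exact (hadj₀ a).ne'
  -- count edges of M:  n = 2 * |E(M)|
  have hmain : A.det = (-1 : ℝ) ^ (Nat.card M.edgeSet) := by
    rcases Nat.eq_zero_or_pos n with hn | hn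
    · subst hn
      have hE : IsEmpty M.edgeSet := by
        constructor
        rintro ⟨e, he⟩
        induction e using Sym2.ind with
        | _ x y => exact x.elim0
      rw [Nat.card_of_isEmpty, pow_zero, Matrix.det_fin_zero]
    · have h2 : π₀ ^ 2 = 1 := by
        ext i
        simp only [sq, Equiv.Perm.mul_apply, Equiv.Perm.one_apply, hπ₀app]
        exact congrArg Fin.val (hinv i)
      have hne1 : π₀ ≠ 1 := by
        intro h
        have hi := (hadj₀ ⟨0, hn⟩).ne
        apply hi
        have : π₀ ⟨0, hn⟩ = ⟨0, hn⟩ := by rw [h]; rfl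
        rw [hπ₀app] at this
        exact this.symm
      have horder : orderOf π₀ = 2 := orderOf_eq_prime h2 hne1
      obtain ⟨k, hct⟩ := Equiv.Perm.cycleType_prime_order
        (by rw [horder]; exact Nat.prime_two)
      rw [horder] at hct
      have hsupp : π₀.support = Finset.univ := by
        ext i
        simp only [Equiv.Perm.mem_support, Finset.mem_univ, iff_true, hπ₀app]
        exact (hadj₀ i).ne'
      have hsum : 2 * (k + 1) = n := by
        have hs := Equiv.Perm.sum_cycleType π₀
        rw [hct, Multiset.sum_replicate, hsupp, Finset.card_univ, Fintype.card_fin,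
          smul_eq_mul] at hs
        omega
      have hdegM : ∀ v : Fin n, M.degree v = 1 := by
        intro v
        have h := hMdeg v
        rw [sachsDeg, Nat.card_eq_fintype_card] at h
        rw [← SimpleGraph.card_neighborSet_eq_degree]
        rw [← h]
        exact Fintype.card_congr (Equiv.refl _)
      have hedge : n = 2 * Nat.card M.edgeSet := by
        have hs := SimpleGraph.sum_degrees_eq_twice_card_edges M
        simp only [hdegM, Finset.sum_const, Finset.card_univ, Fintype.card_fin,
          smul_eq_mul, mul_one] at hs
        rw [Nat.card_eq_fintype_card, ← SimpleGraph.edgeFinset_card]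
        exact hs
      have hcard : Nat.card M.edgeSet = k + 1 := by omega
      have hsign : Equiv.Perm.sign π₀ = (-1 : ℤˣ) ^ (k + 1) := by
        rw [Equiv.Perm.sign_of_cycleType, hct, Multiset.sum_replicate,
          Multiset.card_replicate, smul_eq_mul]
        rw [show (k + 1) * 2 + (k + 1) = 2 * (k + 1) + (k + 1) by ring,
          pow_add, pow_mul]
        norm_num
      rw [hdet, hprod, mul_one, hsign, hcard]
      push_cast
      norm_num
  refine ⟨hmain, ?_⟩
  rw [hmain]
  exact (isUnit_one.neg).pow _
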